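/- Let e ≥ 1 be a natural number, 0 < ε ≤ 1/2, and x a real with x^{1-ε} > e. Then ln(ln(x/e)) - ln(ln(x^{1-ε}/e)) ≤ -ln(1-ε) + ε · (2·ln e)/(ln x - 2·ln e), provided ln x > 2·ln e. -/
import Mathlib


/-- For a natural `e ≥ 1`, `0 < ε ≤ 1/2`, and real `x` with `x^(1-ε) > e` and
`ln x > 2 ln e`, one has
`ln(ln(x/e)) - ln(ln(x^(1-ε)/e)) ≤ -ln(1-ε) + ε·(2 ln e)/(ln x - 2 ln e)`. -/
theorem log_log_diff_bound (e : ℕ) (he : 1 ≤ e) (ε : ℝ) (hε : 0 < ε) (hε2 : ε ≤ 1/2)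
    (x : ℝ) (hx : (e : ℝ) < x ^ (1 - ε)) (hlog : 2 * Real.log e < Real.log x) :
    Real.log (Real.log (x / e)) - Real.log (Real.log (x ^ (1 - ε) / e))
      ≤ -Real.log (1 - ε) + ε * (2 * Real.log e) / (Real.log x - 2 * Real.log e) := by
  have he1 : (1 : ℝ) ≤ e := by exact_mod_cast he
  have he0 : (0 : ℝ) < e := by linarith
  have hε1 : (0 : ℝ) < 1 - ε := by linarith
  -- x > 0
  have hx0 : 0 < x := by
    rcases lt_trichotomy x 0 with h | h | h
    · exfalso
      have hcos : Real.cos ((1 - ε) * Real.pi) ≤ 0 := by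
        apply Real.cos_nonpos_of_pi_div_two_le_of_le
        · nlinarith [Real.pi_gt_three]
        · nlinarith [Real.pi_gt_three]
      have := Real.rpow_def_of_neg h (1 - ε)
      rw [this] at hx
      nlinarith [Real.exp_pos (Real.log x * (1 - ε)), hx]
    · exfalso
      rw [h, Real.zero_rpow (by linarith : (1:ℝ) - ε ≠ 0)] at hx
      linarith
    · exact h
  set c := Real.log e with hc_def
  set L := Real.log x with hL_def
  have hc : 0 ≤ c := Real.log_nonneg he1
  have hL : 0 < L := by linarith
  have hεL : 0 ≤ ε * L := by positivity
  have hlrp : Real.log (x ^ (1 - ε)) = (1 - ε) * L := Real.log_rpow hx0 _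
  have hx' : c < (1 - ε) * L := by
    have := Real.log_lt_log he0 hx
    rwa [hlrp] at this
  have hA : 0 < (1 - ε) * L - c := by linarith
  have hLc : 0 < L - c := by nlinarith
  have hden : 0 < L - 2 * c := by linarith
  have hlog1 : Real.log (x / e) = L - c := Real.log_div hx0.ne' (by positivity)
  have hlog2 : Real.log (x ^ (1 - ε) / e) = (1 - ε) * L - c := by
    rw [Real.log_div (by positivity) (by positivity), hlrp]
  rw [hlog1, hlog2]
  set A := (1 - ε) * L - c with hA_def
  have hT : 0 < (1 - ε) * (L - c) / A := by positivity
  have hlogT : Real.log ((1 - ε) * (L - c) / A)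
      = Real.log (1 - ε) + Real.log (L - c) - Real.log A := by
    rw [Real.log_div (by positivity) hA.ne', Real.log_mul hε1.ne' hLc.ne']
  have hT1 : Real.log ((1 - ε) * (L - c) / A) ≤ (1 - ε) * (L - c) / A - 1 :=
    Real.log_le_sub_one_of_pos hT
  have hT2 : (1 - ε) * (L - c) / A - 1 = ε * c / A := by
    field_simp
    ring
  have hT3 : ε * c / A ≤ ε * (2 * c) / (L - 2 * c) := by
    rw [div_le_div_iff₀ hA hden, hA_def]
    nlinarith [mul_nonneg (mul_nonneg (mul_nonneg hε.le hc) hL.le)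
      (by linarith : (0:ℝ) ≤ 1 - 2 * ε)]
  linarith [hT1, hlogT, hT2, hT3]
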